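/- Let d ≥ 1 and v ∈ ℝ^d with |v| < 1. For x ∈ ℝ^d, x ≠ 0, define G_v(x) = ∫_0^∞ e^{−t} t ((1−|v|²)t² + |x|² + 2 i t (v·x))^{−(d+1)/2} dt, where z ↦ z^{−(d+1)/2} denotes the principal branch of the complex power (note the base has real part (1−|v|²)t² + |x|² > 0, so its modulus is at least (1−|v|²)t² + |x|², and the integral converges absolutely). Then there is a constant C > 0 depending only on d and |v| such that: (i) |G_v(x)| ≤ C |x|^{−(d+1)} for all x with |x| ≥ 1; (ii) if d ≥ 2, then |G_v(x)| ≤ C |x|^{−(d−1)} for all x ≠ 0, while if d = 1, then |G_v(x)| ≤ C (1 + |log|x||) for all x ≠ 0. -/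

import Mathlib

noncomputable section

open MeasureTheory Filter Complex
open scoped RealInnerProductSpace ENNReal

abbrev Ed (d : ℕ) := EuclideanSpace ℝ (Fin d)

/-- The resolvent kernel
`G_v(x) = ∫_0^∞ e^{-t} t ((1-|v|²)t² + |x|² + 2it(v·x))^{-(d+1)/2} dt`,
with the principal branch of the complex power. -/
def Gv {d : ℕ} (v : Ed d) (x : Ed d) : ℂ :=
  ∫ t in Set.Ioi (0 : ℝ),
    ((Real.exp (-t) * t : ℝ) : ℂ) *
      ((((1 - ‖v‖ ^ 2) * t ^ 2 + ‖x‖ ^ 2 : ℝ) : ℂ) + 2 * Complex.I * (t : ℂ) * ((⟪v, x⟫ : ℝ) : ℂ))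
        ^ ((-(((d : ℝ) + 1) / 2) : ℝ) : ℂ)

def Fv (d : ℕ) (v x : Ed d) : ℝ → ℂ := fun t =>
  ((Real.exp (-t) * t : ℝ) : ℂ) *
      ((((1 - ‖v‖ ^ 2) * t ^ 2 + ‖x‖ ^ 2 : ℝ) : ℂ) + 2 * Complex.I * (t : ℂ) * ((⟪v, x⟫ : ℝ) : ℂ))
        ^ ((-(((d : ℝ) + 1) / 2) : ℝ) : ℂ)

lemma Fv_norm_le {d : ℕ} (v x : Ed d) {t : ℝ} (ht : 0 < t)
    {R : ℝ} (hR : 0 < R) (hR2 : R ≤ (1 - ‖v‖ ^ 2) * t ^ 2 + ‖x‖ ^ 2) :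
    ‖Fv d v x t‖ ≤ Real.exp (-t) * t * R ^ (-(((d : ℝ) + 1) / 2)) := by
  have hp : (-(((d : ℝ) + 1) / 2)) ≤ 0 := by
    have : (0:ℝ) ≤ (d:ℝ) + 1 := by positivity
    linarith
  set z : ℂ := (((1 - ‖v‖ ^ 2) * t ^ 2 + ‖x‖ ^ 2 : ℝ) : ℂ)
      + 2 * Complex.I * (t : ℂ) * ((⟪v, x⟫ : ℝ) : ℂ) with hz
  have hre : z.re = (1 - ‖v‖ ^ 2) * t ^ 2 + ‖x‖ ^ 2 := by
    simp [hz, ← Complex.ofReal_pow]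
  have habs : R ≤ ‖z‖ := by
    calc R ≤ z.re := hR2.trans_eq hre.symm
    _ ≤ ‖z‖ := Complex.re_le_norm z
  have h2 : ‖(z ^ ((-(((d : ℝ) + 1) / 2) : ℝ) : ℂ))‖
      ≤ ‖z‖ ^ (-(((d : ℝ) + 1) / 2)) := by
    have := Complex.norm_cpow_le z (((-(((d : ℝ) + 1) / 2) : ℝ) : ℂ))
    simpa using this
  have h3 : ‖z‖ ^ (-(((d : ℝ) + 1) / 2)) ≤ R ^ (-(((d : ℝ) + 1) / 2)) :=
    Real.rpow_le_rpow_of_nonpos hR habs hp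
  have h1 : ‖Fv d v x t‖ = (Real.exp (-t) * t) *
      ‖(z ^ ((-(((d : ℝ) + 1) / 2) : ℝ) : ℂ))‖ := by
    rw [Fv, norm_mul, Complex.norm_real, Real.norm_of_nonneg (by positivity)]
  rw [h1]
  exact mul_le_mul_of_nonneg_left (h2.trans h3) (by positivity)

lemma Fv_contOn {d : ℕ} (v : Ed d) (hv : ‖v‖ < 1) (x : Ed d) :
    ContinuousOn (Fv d v x) (Set.Ioi 0) := by
  intro t ht
  apply ContinuousAt.continuousWithinAt
  apply ContinuousAt.mul
  · exact Complex.continuous_ofReal.continuousAt.comp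
      (((Real.continuous_exp.comp continuous_neg).mul continuous_id).continuousAt)
  · apply ContinuousAt.cpow _ continuousAt_const
    · left
      have h1 : 0 < 1 - ‖v‖ ^ 2 := by nlinarith [norm_nonneg v]
      have ht' : (0:ℝ) < t := ht
      have hre : ((((1 - ‖v‖ ^ 2) * t ^ 2 + ‖x‖ ^ 2 : ℝ) : ℂ)
          + 2 * Complex.I * (t : ℂ) * ((⟪v, x⟫ : ℝ) : ℂ)).re
          = (1 - ‖v‖ ^ 2) * t ^ 2 + ‖x‖ ^ 2 := by
        simp [← Complex.ofReal_pow]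
      rw [hre]
      nlinarith [mul_pos h1 (pow_pos ht' 2), sq_nonneg ‖x‖]
    · apply ContinuousAt.add
      · exact Complex.continuous_ofReal.continuousAt.comp (by fun_prop)
      · exact (continuousAt_const.mul (Complex.continuous_ofReal.continuousAt)).mul
          continuousAt_const

lemma exp_mul_integrableOn : IntegrableOn (fun t : ℝ => Real.exp (-t) * t) (Set.Ioi 0) := by
  have h := Real.GammaIntegral_convergent (by norm_num : (0:ℝ) < 2)
  refine h.congr_fun (fun t ht => ?_) measurableSet_Ioi
  norm_num

lemma exp_mul_integral : ∫ t in Set.Ioi (0:ℝ), Real.exp (-t) * t = 1 := by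
  have h := (Real.Gamma_eq_integral (by norm_num : (0:ℝ) < 2)).symm
  have h2 : Real.Gamma 2 = 1 := by
    rw [show (2:ℝ) = ((1:ℕ):ℝ) + 1 by norm_num, Real.Gamma_nat_eq_factorial]; norm_num
  rw [← h2, ← h]
  norm_num

lemma Fv_integrableOn {d : ℕ} (v : Ed d) (hv : ‖v‖ < 1) (x : Ed d) (hx : x ≠ 0) :
    IntegrableOn (Fv d v x) (Set.Ioi 0) := by
  have hx2 : (0:ℝ) < ‖x‖ ^ 2 := by
    have := norm_pos_iff.mpr hx
    positivity
  refine Integrable.mono' ((exp_mul_integrableOn.mul_const ((‖x‖^2) ^ (-(((d : ℝ) + 1) / 2)))))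
    ((Fv_contOn v hv x).aestronglyMeasurable measurableSet_Ioi) ?_
  filter_upwards [ae_restrict_mem measurableSet_Ioi] with t ht
  have h1 : (0:ℝ) < 1 - ‖v‖ ^ 2 := by nlinarith [norm_nonneg v]
  have hb : (0:ℝ) ≤ (1 - ‖v‖ ^ 2) * t ^ 2 := mul_nonneg h1.le (sq_nonneg t)
  exact Fv_norm_le v x ht hx2 (by linarith)

lemma rpow_alg0 (r : ℝ) (hr : 0 ≤ r) (d : ℕ) :
    ((r ^ 2 : ℝ)) ^ (-(((d : ℝ) + 1) / 2)) = r ^ (-((d : ℝ) + 1)) := by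
  rw [← Real.rpow_natCast r 2, ← Real.rpow_mul hr]
  congr 1
  push_cast
  ring

lemma rpow_alg1 (r : ℝ) (hr : 0 < r) (d : ℕ) :
    r ^ 2 * ((r ^ 2 : ℝ)) ^ (-(((d : ℝ) + 1) / 2)) = r ^ (1 - (d : ℝ)) := by
  rw [rpow_alg0 r hr.le d, ← Real.rpow_natCast r 2, ← Real.rpow_add hr]
  congr 1
  push_cast
  ring

lemma aux_eq (b : ℝ) (hb : 0 ≤ b) {t : ℝ} (ht : 0 < t) (d : ℕ) :
    Real.exp (-t) * t * ((b * t ^ 2) ^ (-(((d : ℝ) + 1) / 2)))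
      = b ^ (-(((d : ℝ) + 1) / 2)) * (Real.exp (-t) * t ^ (-(d : ℝ))) := by
  have hT : t * t ^ (-((d : ℝ) + 1)) = t ^ (-(d : ℝ)) := by
    rw [show -(d : ℝ) = 1 + -((d : ℝ) + 1) by ring, Real.rpow_add ht, Real.rpow_one]
  rw [Real.mul_rpow hb (by positivity), rpow_alg0 t ht.le d, ← hT]
  ring

/-- Pointwise bounds for the resolvent kernel `G_v`, `|v| < 1`:
`|G_v(x)| ≲ |x|^{-(d+1)}` for `|x| ≥ 1`, and for all `x ≠ 0`,
`|G_v(x)| ≲ |x|^{-(d-1)}` when `d ≥ 2`, resp. `|G_v(x)| ≲ 1 + |log|x||` when `d = 1`. -/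
theorem resolvent_kernel_bounds
    (d : ℕ) (hd : 1 ≤ d) (v : Ed d) (hv : ‖v‖ < 1) :
    ∃ C : ℝ, 0 < C ∧
      (∀ x : Ed d, 1 ≤ ‖x‖ → ‖Gv v x‖ ≤ C * ‖x‖ ^ (-((d : ℝ) + 1))) ∧
      (2 ≤ d → ∀ x : Ed d, x ≠ 0 → ‖Gv v x‖ ≤ C * ‖x‖ ^ (-((d : ℝ) - 1))) ∧
      (d = 1 → ∀ x : Ed d, x ≠ 0 → ‖Gv v x‖ ≤ C * (1 + |Real.log ‖x‖|)) := by
  have hb : (0:ℝ) < 1 - ‖v‖ ^ 2 := by nlinarith [norm_nonneg v]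
  set B : ℝ := (1 - ‖v‖ ^ 2) ^ (-(((d : ℝ) + 1) / 2)) with hBd
  have hBpos : 0 < B := Real.rpow_pos_of_pos hb _
  have hGv : ∀ x : Ed d, Gv v x = ∫ t in Set.Ioi (0:ℝ), Fv d v x t := fun x => rfl
  have hexpInt : ∀ c : ℝ, IntegrableOn (fun t : ℝ => Real.exp (-t)) (Set.Ioi c) := by
    intro c
    simpa using exp_neg_integrableOn_Ioi c one_pos
  have hsplit : ∀ x : Ed d, x ≠ 0 →
      ‖Gv v x‖ ≤ (1/2) * ‖x‖ ^ (1 - (d:ℝ)) + ‖∫ t in Set.Ioi ‖x‖, Fv d v x t‖ := by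
    intro x hx0
    have hr : 0 < ‖x‖ := norm_pos_iff.mpr hx0
    have hx2 : (0:ℝ) < ‖x‖ ^ 2 := by positivity
    have hint := Fv_integrableOn v hv x hx0
    have heq : Gv v x = (∫ t in Set.Ioc (0:ℝ) ‖x‖, Fv d v x t)
        + ∫ t in Set.Ioi ‖x‖, Fv d v x t := by
      rw [hGv, ← MeasureTheory.setIntegral_union (Set.Ioc_disjoint_Ioi le_rfl) measurableSet_Ioi
        (hint.mono_set Set.Ioc_subset_Ioi_self) (hint.mono_set (Set.Ioi_subset_Ioi hr.le)),
        Set.Ioc_union_Ioi_eq_Ioi hr.le]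
    rw [heq]
    refine (norm_add_le _ _).trans (add_le_add_left ?_ _)
    have h1 : ‖∫ t in Set.Ioc (0:ℝ) ‖x‖, Fv d v x t‖
        ≤ ∫ t in Set.Ioc (0:ℝ) ‖x‖, t * ((‖x‖ ^ 2) ^ (-(((d : ℝ) + 1) / 2))) := by
      refine norm_integral_le_of_norm_le
        ((continuous_id.mul continuous_const).integrableOn_Ioc) ?_
      filter_upwards [ae_restrict_mem measurableSet_Ioc] with t ht
      refine (Fv_norm_le v x ht.1 hx2
        (le_add_of_nonneg_left (mul_nonneg hb.le (sq_nonneg t)))).trans ?_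
      have he : Real.exp (-t) ≤ 1 := Real.exp_le_one_iff.mpr (by linarith [ht.1])
      have hK : (0:ℝ) ≤ (‖x‖ ^ 2) ^ (-(((d : ℝ) + 1) / 2)) := Real.rpow_nonneg hx2.le _
      have h9 := mul_le_mul_of_nonneg_right (mul_le_mul_of_nonneg_right he ht.1.le) hK
      linarith [h9]
    refine h1.trans ?_
    rw [MeasureTheory.integral_mul_const]
    have hid : ∫ t in Set.Ioc (0:ℝ) ‖x‖, t = ‖x‖ ^ 2 / 2 := by
      rw [← intervalIntegral.integral_of_le hr.le, integral_id]
      ring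
    rw [hid, show ‖x‖ ^ 2 / 2 * ((‖x‖ ^ 2) ^ (-(((d : ℝ) + 1) / 2)))
        = 1/2 * (‖x‖ ^ 2 * ((‖x‖ ^ 2) ^ (-(((d : ℝ) + 1) / 2)))) by ring,
      rpow_alg1 ‖x‖ hr d]
  refine ⟨1 + B, by positivity, ?_, ?_, ?_⟩
  · -- part (i)
    intro x hx
    have hxn : 0 < ‖x‖ := lt_of_lt_of_le one_pos hx
    have hx2 : (0:ℝ) < ‖x‖ ^ 2 := by positivity
    have key : ‖Gv v x‖ ≤ ∫ t in Set.Ioi (0:ℝ),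
        (Real.exp (-t) * t) * ((‖x‖ ^ 2) ^ (-(((d : ℝ) + 1) / 2))) := by
      rw [hGv]
      refine norm_integral_le_of_norm_le (exp_mul_integrableOn.mul_const _) ?_
      filter_upwards [ae_restrict_mem measurableSet_Ioi] with t ht
      exact Fv_norm_le v x ht hx2
        (le_add_of_nonneg_left (mul_nonneg hb.le (sq_nonneg t)))
    rw [integral_mul_const, exp_mul_integral, one_mul, rpow_alg0 ‖x‖ hxn.le d] at key
    have : (1:ℝ) * ‖x‖ ^ (-((d : ℝ) + 1)) ≤ (1 + B) * ‖x‖ ^ (-((d : ℝ) + 1)) := by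
      have := Real.rpow_nonneg hxn.le (-((d : ℝ) + 1))
      nlinarith
    linarith [key, this]
  · -- part (ii)
    intro hd2 x hx0
    have hr : 0 < ‖x‖ := norm_pos_iff.mpr hx0
    have hint := Fv_integrableOn v hv x hx0
    have hdlt : -(d:ℝ) < -1 := by
      have : (2:ℝ) ≤ (d:ℝ) := by exact_mod_cast hd2
      linarith
    have key2 : ‖∫ t in Set.Ioi ‖x‖, Fv d v x t‖ ≤ B * ‖x‖ ^ (1 - (d:ℝ)) := by
      have h1 : ‖∫ t in Set.Ioi ‖x‖, Fv d v x t‖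
          ≤ ∫ t in Set.Ioi ‖x‖, t ^ (-(d:ℝ)) * B := by
        refine norm_integral_le_of_norm_le
          ((integrableOn_Ioi_rpow_of_lt hdlt hr).mul_const B) ?_
        filter_upwards [ae_restrict_mem measurableSet_Ioi] with t ht
        have ht0 : 0 < t := hr.trans ht
        have h2 := Fv_norm_le v x ht0 (mul_pos hb (pow_pos ht0 2))
          (le_add_of_nonneg_right (sq_nonneg ‖x‖))
        rw [aux_eq _ hb.le ht0 d] at h2
        refine h2.trans ?_
        have he : Real.exp (-t) ≤ 1 := Real.exp_le_one_iff.mpr (by linarith)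
        have htd : (0:ℝ) ≤ t ^ (-(d:ℝ)) := Real.rpow_nonneg ht0.le _
        rw [← hBd]
        have h9 := mul_le_mul_of_nonneg_left (mul_le_of_le_one_left htd he) hBpos.le
        linarith [h9]
      rw [MeasureTheory.integral_mul_const, integral_Ioi_rpow_of_lt hdlt hr] at h1
      refine h1.trans ?_
      have hd1 : (1:ℝ) ≤ (d:ℝ) - 1 := by
        have : (2:ℝ) ≤ (d:ℝ) := by exact_mod_cast hd2
        linarith
      have h5 : -‖x‖ ^ (-(d:ℝ) + 1) / (-(d:ℝ) + 1) = ‖x‖ ^ (1 - (d:ℝ)) / ((d:ℝ) - 1) := by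
        rw [show (-(d:ℝ) + 1) = (1 - (d:ℝ)) by ring]
        rw [neg_div, ← div_neg, neg_sub]
      rw [h5]
      have h6 : ‖x‖ ^ (1 - (d:ℝ)) / ((d:ℝ) - 1) ≤ ‖x‖ ^ (1 - (d:ℝ)) :=
        div_le_self (Real.rpow_nonneg hr.le _) hd1
      nlinarith [Real.rpow_nonneg hr.le (1 - (d:ℝ))]
    have htot := (hsplit x hx0).trans (add_le_add_right key2 _)
    have hexp : -((d:ℝ) - 1) = 1 - (d:ℝ) := by ring
    rw [hexp]
    have hrp : (0:ℝ) ≤ ‖x‖ ^ (1 - (d:ℝ)) := Real.rpow_nonneg hr.le _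
    nlinarith
  · -- part (iii)
    intro hd1 x hx0
    subst hd1
    have hr : 0 < ‖x‖ := norm_pos_iff.mpr hx0
    have hint := Fv_integrableOn v hv x hx0
    have hBd1 : B = (1 - ‖v‖ ^ 2) ^ (-(((1:ℕ) : ℝ) + 1) / 2) := by rw [hBd]; norm_num
    have hptw : ∀ t : ℝ, 0 < t → ‖Fv 1 v x t‖ ≤ B * (Real.exp (-t) * t⁻¹) := by
      intro t ht0
      have h2 := Fv_norm_le v x ht0 (mul_pos hb (pow_pos ht0 2))
        (le_add_of_nonneg_right (sq_nonneg ‖x‖))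
      rw [aux_eq _ hb.le ht0 1] at h2
      rw [← hBd] at h2
      refine h2.trans_eq ?_
      norm_num [Real.rpow_neg_one]
    have key3 : ‖∫ t in Set.Ioi ‖x‖, Fv 1 v x t‖ ≤ B * (1 + |Real.log ‖x‖|) := by
      rcases le_or_gt 1 ‖x‖ with h1x | h1x
      · have h1 : ‖∫ t in Set.Ioi ‖x‖, Fv 1 v x t‖
            ≤ ∫ t in Set.Ioi ‖x‖, B * Real.exp (-t) := by
          refine norm_integral_le_of_norm_le ((hexpInt ‖x‖).const_mul B) ?_
          filter_upwards [ae_restrict_mem measurableSet_Ioi] with t ht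
          have ht0 : (0:ℝ) < t := hr.trans ht
          refine (hptw t ht0).trans ?_
          have hti : t⁻¹ ≤ 1 := by
            rw [inv_le_one_iff₀]
            right; linarith [h1x.trans_lt ht]
          have hte : (0:ℝ) < Real.exp (-t) := Real.exp_pos _
          have h9 := mul_le_mul_of_nonneg_left (mul_le_of_le_one_right hte.le hti) hBpos.le
          linarith [h9]
        rw [MeasureTheory.integral_const_mul, integral_exp_neg_Ioi] at h1
        refine h1.trans ?_
        have he : Real.exp (-‖x‖) ≤ 1 := Real.exp_le_one_iff.mpr (by linarith)
        nlinarith [abs_nonneg (Real.log ‖x‖)]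
      · -- ‖x‖ < 1 : split at 1
        have heq2 : (∫ t in Set.Ioi ‖x‖, Fv 1 v x t)
            = (∫ t in Set.Ioc ‖x‖ 1, Fv 1 v x t) + ∫ t in Set.Ioi (1:ℝ), Fv 1 v x t := by
          rw [← MeasureTheory.setIntegral_union (Set.Ioc_disjoint_Ioi le_rfl)
            measurableSet_Ioi
            (hint.mono_set (fun t ht => hr.trans ht.1))
            (hint.mono_set (fun t ht => Set.mem_Ioi.mpr (lt_of_lt_of_le one_pos (le_of_lt (Set.mem_Ioi.mp ht)))))]
          rw [Set.Ioc_union_Ioi_eq_Ioi h1x.le]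
        rw [heq2]
        have hA : ‖∫ t in Set.Ioc ‖x‖ 1, Fv 1 v x t‖ ≤ B * |Real.log ‖x‖| := by
          have hinv : IntegrableOn (fun t : ℝ => B * t⁻¹) (Set.Ioc ‖x‖ (1:ℝ)) := by
            have h0 : IntervalIntegrable (fun t : ℝ => t⁻¹) volume ‖x‖ 1 := by
              refine intervalIntegral.intervalIntegrable_inv (fun t ht => ?_)
                continuousOn_id
              rw [Set.uIcc_of_le h1x.le] at ht
              exact ne_of_gt (lt_of_lt_of_le hr ht.1)
            rw [intervalIntegrable_iff_integrableOn_Ioc_of_le h1x.le] at h0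
            exact h0.const_mul B
          have h1 : ‖∫ t in Set.Ioc ‖x‖ 1, Fv 1 v x t‖
              ≤ ∫ t in Set.Ioc ‖x‖ 1, B * t⁻¹ := by
            refine norm_integral_le_of_norm_le hinv ?_
            filter_upwards [ae_restrict_mem measurableSet_Ioc] with t ht
            have ht0 : (0:ℝ) < t := hr.trans ht.1
            refine (hptw t ht0).trans ?_
            have he : Real.exp (-t) ≤ 1 := Real.exp_le_one_iff.mpr (by linarith)
            have hti0 : (0:ℝ) ≤ t⁻¹ := by positivity
            have h9 := mul_le_mul_of_nonneg_left (mul_le_of_le_one_left hti0 he) hBpos.le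
            linarith [h9]
          refine h1.trans ?_
          rw [MeasureTheory.integral_const_mul,
            ← intervalIntegral.integral_of_le h1x.le,
            integral_inv (by
              rw [Set.uIcc_of_le h1x.le]
              rintro ⟨h0, -⟩
              exact absurd h0 (not_le.mpr hr))]
          have hlog : Real.log (1 / ‖x‖) = |Real.log ‖x‖| := by
            rw [one_div, Real.log_inv, abs_of_nonpos (Real.log_nonpos hr.le h1x.le)]
          rw [hlog]
        have hB2 : ‖∫ t in Set.Ioi (1:ℝ), Fv 1 v x t‖ ≤ B := by
          have h1 : ‖∫ t in Set.Ioi (1:ℝ), Fv 1 v x t‖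
              ≤ ∫ t in Set.Ioi (1:ℝ), B * Real.exp (-t) := by
            refine norm_integral_le_of_norm_le ((hexpInt 1).const_mul B) ?_
            filter_upwards [ae_restrict_mem measurableSet_Ioi] with t ht
            have ht0 : (0:ℝ) < t := lt_trans one_pos ht
            refine (hptw t ht0).trans ?_
            have ht1 : (1:ℝ) < t := ht
            have hti : t⁻¹ ≤ 1 := by
              rw [inv_le_one_iff₀]; right; linarith
            have hte : (0:ℝ) < Real.exp (-t) := Real.exp_pos _
            have h9 := mul_le_mul_of_nonneg_left (mul_le_of_le_one_right hte.le hti) hBpos.le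
            linarith [h9]
          rw [MeasureTheory.integral_const_mul, integral_exp_neg_Ioi] at h1
          refine h1.trans ?_
          have he : Real.exp (-(1:ℝ)) ≤ 1 := Real.exp_le_one_iff.mpr (by norm_num)
          nlinarith
        calc ‖(∫ t in Set.Ioc ‖x‖ 1, Fv 1 v x t) + ∫ t in Set.Ioi (1:ℝ), Fv 1 v x t‖
            ≤ ‖∫ t in Set.Ioc ‖x‖ 1, Fv 1 v x t‖ + ‖∫ t in Set.Ioi (1:ℝ), Fv 1 v x t‖ :=
              norm_add_le _ _
          _ ≤ B * |Real.log ‖x‖| + B := add_le_add hA hB2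
          _ ≤ B * (1 + |Real.log ‖x‖|) := by ring_nf; linarith
    have htot := (hsplit x hx0).trans (add_le_add_right key3 _)
    have hone : ‖x‖ ^ (1 - ((1:ℕ):ℝ)) = 1 := by norm_num
    rw [hone] at htot
    refine htot.trans ?_
    have := abs_nonneg (Real.log ‖x‖)
    nlinarith
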